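/- Let P and Q be orthogonal projections on a finite-dimensional Hilbert space. Then the space decomposes into an orthogonal direct sum of subspaces invariant under both P and Q, each of dimension at most 2. -/

import Mathlib

open scoped InnerProductSpace
open Module Submodule

universe u

lemma finrank_span_pair_le {E : Type u} [NormedAddCommGroup E] [InnerProductSpace ℂ E]
    [FiniteDimensional ℂ E] (a b : E) :
    Module.finrank ℂ (Submodule.span ℂ ({a, b} : Set E)) ≤ 2 := by
  have hsingle : ∀ c : E, Module.finrank ℂ (Submodule.span ℂ ({c} : Set E)) ≤ 1 := by
    intro c
    by_cases hc : c = 0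
    · subst hc
      rw [Submodule.span_zero_singleton]
      rw [finrank_bot]
      omega
    · rw [finrank_span_singleton hc]
  rw [Set.insert_eq, Submodule.span_union]
  refine le_trans (Submodule.finrank_add_le_finrank_add_finrank _ _) ?_
  have := hsingle a; have := hsingle b; omega

lemma jordan_small_invariant {E : Type u} [NormedAddCommGroup E] [InnerProductSpace ℂ E]
    [FiniteDimensional ℂ E] [Nontrivial E]
    (P Q : E →ₗ[ℂ] E) (hP2 : P ∘ₗ P = P) (hQ2 : Q ∘ₗ Q = Q) :
    ∃ W : Submodule ℂ E, W ≠ ⊥ ∧ Submodule.map P W ≤ W ∧ Submodule.map Q W ≤ W ∧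
      Module.finrank ℂ W ≤ 2 := by
  obtain ⟨μ, hμ⟩ := Module.End.exists_eigenvalue (P + Q)
  obtain ⟨v, hv⟩ := hμ.exists_hasEigenvector
  have hv0 : v ≠ 0 := hv.2
  have heig : P v + Q v = μ • v := by
    have := hv.apply_eq_smul
    simpa using this
  have hPP : ∀ x, P (P x) = P x := fun x => congrFun (congrArg DFunLike.coe hP2) x
  have hQQ : ∀ x, Q (Q x) = Q x := fun x => congrFun (congrArg DFunLike.coe hQ2) x
  by_cases h0 : P v = 0 ∧ Q v = 0
  · refine ⟨Submodule.span ℂ {v}, ?_, ?_, ?_, ?_⟩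
    · simpa [Submodule.span_singleton_eq_bot] using hv0
    · rw [Submodule.map_span, Set.image_singleton, h0.1, Submodule.span_zero_singleton]
      exact bot_le
    · rw [Submodule.map_span, Set.image_singleton, h0.2, Submodule.span_zero_singleton]
      exact bot_le
    · by_cases hv : v = 0
      · subst hv
        rw [Submodule.span_zero_singleton, finrank_bot]
        omega
      · rw [finrank_span_singleton hv]; omega
  · refine ⟨Submodule.span ℂ {P v, Q v}, ?_, ?_, ?_, ?_⟩
    · intro hbot
      rw [Submodule.span_eq_bot] at hbot
      exact h0 ⟨hbot _ (by simp), hbot _ (by simp)⟩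
    · rw [Submodule.map_span, Submodule.span_le]
      rintro x ⟨y, hy, rfl⟩
      simp only [Set.mem_insert_iff, Set.mem_singleton_iff] at hy
      rcases hy with rfl | rfl
      · rw [hPP]
        exact Submodule.subset_span (by simp)
      · have : P (Q v) = μ • P v - P v := by
          have hq : Q v = μ • v - P v := by
            rw [eq_sub_iff_add_eq, add_comm]; exact heig
          rw [hq, map_sub, map_smul, hPP]
        rw [this]
        exact Submodule.sub_mem _
          (Submodule.smul_mem _ _ (Submodule.subset_span (by simp)))
          (Submodule.subset_span (by simp))
    · rw [Submodule.map_span, Submodule.span_le]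
      rintro x ⟨y, hy, rfl⟩
      simp only [Set.mem_insert_iff, Set.mem_singleton_iff] at hy
      rcases hy with rfl | rfl
      · have : Q (P v) = μ • Q v - Q v := by
          have hp : P v = μ • v - Q v := by
            rw [eq_sub_iff_add_eq]; exact heig
          rw [hp, map_sub, map_smul, hQQ]
        rw [this]
        exact Submodule.sub_mem _
          (Submodule.smul_mem _ _ (Submodule.subset_span (by simp)))
          (Submodule.subset_span (by simp))
      · rw [hQQ]
        exact Submodule.subset_span (by simp)
    · exact finrank_span_pair_le _ _

lemma jordan_aux : ∀ (n : ℕ) (E : Type u) [NormedAddCommGroup E] [InnerProductSpace ℂ E]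
    [FiniteDimensional ℂ E], Module.finrank ℂ E ≤ n →
    ∀ (P Q : E →ₗ[ℂ] E), P ∘ₗ P = P → Q ∘ₗ Q = Q → P.IsSymmetric → Q.IsSymmetric →
    ∃ (ι : Type) (_ : Fintype ι) (W : ι → Submodule ℂ E),
      (⨆ i, W i) = ⊤ ∧
      (∀ i j, i ≠ j → ∀ x ∈ W i, ∀ y ∈ W j, ⟪x, y⟫_ℂ = 0) ∧
      (∀ i, Submodule.map P (W i) ≤ W i) ∧
      (∀ i, Submodule.map Q (W i) ≤ W i) ∧
      (∀ i, Module.finrank ℂ (W i) ≤ 2) := by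
  intro n
  induction n with
  | zero =>
    intro E _ _ _ hrank P Q _ _ _ _
    have : Subsingleton E := by
      rw [← Module.finrank_zero_iff (R := ℂ)]
      omega
    refine ⟨Empty, inferInstance, Empty.elim, ?_, ?_, ?_, ?_, ?_⟩
    · rw [iSup_of_empty]
      exact Subsingleton.elim _ _
    all_goals exact fun i => i.elim
  | succ n ih =>
    intro E _ _ _ hrank P Q hP2 hQ2 hPs hQs
    by_cases hss : Subsingleton E
    · refine ⟨Empty, inferInstance, Empty.elim, ?_, ?_, ?_, ?_, ?_⟩
      · rw [iSup_of_empty]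
        exact Subsingleton.elim _ _
      all_goals exact fun i => i.elim
    · have : Nontrivial E := not_subsingleton_iff_nontrivial.mp hss
      obtain ⟨W₀, hW₀ne, hW₀P, hW₀Q, hW₀rk⟩ := jordan_small_invariant P Q hP2 hQ2
      set K := W₀ᗮ with hK
      have hPK : ∀ x ∈ K, P x ∈ K := by
        intro x hx
        rw [Submodule.mem_orthogonal]
        intro u hu
        rw [← hPs u x]
        exact hx (P u) (hW₀P (Submodule.mem_map_of_mem hu))
      have hQK : ∀ x ∈ K, Q x ∈ K := by
        intro x hx
        rw [Submodule.mem_orthogonal]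
        intro u hu
        rw [← hQs u x]
        exact hx (Q u) (hW₀Q (Submodule.mem_map_of_mem hu))
      set P' : K →ₗ[ℂ] K := P.restrict hPK with hP'
      set Q' : K →ₗ[ℂ] K := Q.restrict hQK with hQ'
      have hPP : ∀ x, P (P x) = P x := fun x => congrFun (congrArg DFunLike.coe hP2) x
      have hQQ : ∀ x, Q (Q x) = Q x := fun x => congrFun (congrArg DFunLike.coe hQ2) x
      have hP'2 : P' ∘ₗ P' = P' := by
        ext x
        simp [hP', LinearMap.restrict_apply, hPP]
      have hQ'2 : Q' ∘ₗ Q' = Q' := by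
        ext x
        simp [hQ', LinearMap.restrict_apply, hQQ]
      have hP's : P'.IsSymmetric := hPs.restrict_invariant hPK
      have hQ's : Q'.IsSymmetric := hQs.restrict_invariant hQK
      have hW₀pos : 0 < Module.finrank ℂ W₀ := by
        have : Nontrivial W₀ := Submodule.nontrivial_iff_ne_bot.mpr hW₀ne
        exact Module.finrank_pos
      have hKrank : Module.finrank ℂ K ≤ n := by
        have h1 := Submodule.finrank_add_finrank_orthogonal (K := W₀) (𝕜 := ℂ)
        have h2 : Module.finrank ℂ K = Module.finrank ℂ W₀ᗮ := rfl
        omega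
      obtain ⟨ι, hfin, W', hsup', horth', hinvP', hinvQ', hrk'⟩ :=
        ih K hKrank P' Q' hP'2 hQ'2 hP's hQ's
      refine ⟨Option ι, @instFintypeOption ι hfin, fun o => o.elim W₀ (fun i => (W' i).map K.subtype), ?_, ?_, ?_, ?_, ?_⟩
      · rw [iSup_option]
        simp only [Option.elim]
        rw [← Submodule.map_iSup, hsup', Submodule.map_subtype_top]
        exact Submodule.sup_orthogonal_of_hasOrthogonalProjection
      · rintro (_ | i) (_ | j) hij x hx y hy
        · exact absurd rfl hij
        · rcases hy with ⟨b, hb, rfl⟩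
          exact (Submodule.mem_orthogonal _ _).mp b.2 x hx
        · rcases hx with ⟨a, ha, rfl⟩
          exact (Submodule.mem_orthogonal' _ _).mp a.2 y hy
        · rcases hx with ⟨a, ha, rfl⟩
          rcases hy with ⟨b, hb, rfl⟩
          have hij' : i ≠ j := fun h => hij (by rw [h])
          exact horth' i j hij' a ha b hb
      · rintro (_ | i)
        · exact hW₀P
        · rintro x ⟨y, ⟨a, ha, rfl⟩, rfl⟩
          refine ⟨P' a, hinvP' i (Submodule.mem_map_of_mem ha), ?_⟩
          simp [hP', LinearMap.restrict_apply]
      · rintro (_ | i)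
        · exact hW₀Q
        · rintro x ⟨y, ⟨a, ha, rfl⟩, rfl⟩
          refine ⟨Q' a, hinvQ' i (Submodule.mem_map_of_mem ha), ?_⟩
          simp [hQ', LinearMap.restrict_apply]
      · rintro (_ | i)
        · exact hW₀rk
        · show Module.finrank ℂ ((W' i).map K.subtype) ≤ 2
          rw [Submodule.finrank_map_subtype_eq]
          exact hrk' i

theorem stmt17 {E : Type*} [NormedAddCommGroup E] [InnerProductSpace ℂ E]
    [FiniteDimensional ℂ E]
    (P Q : E →ₗ[ℂ] E) (hP2 : P ∘ₗ P = P) (hQ2 : Q ∘ₗ Q = Q)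
    (hPs : P.IsSymmetric) (hQs : Q.IsSymmetric) :
    ∃ (ι : Type) (_ : Fintype ι) (W : ι → Submodule ℂ E),
      (⨆ i, W i) = ⊤ ∧
      (∀ i j, i ≠ j → ∀ x ∈ W i, ∀ y ∈ W j, ⟪x, y⟫_ℂ = 0) ∧
      (∀ i, Submodule.map P (W i) ≤ W i) ∧
      (∀ i, Submodule.map Q (W i) ≤ W i) ∧
      (∀ i, Module.finrank ℂ (W i) ≤ 2) :=
  jordan_aux (Module.finrank ℂ E) E le_rfl P Q hP2 hQ2 hPs hQs
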